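/- Let (P_1, ..., P_d, U = [[A, B], [C, D]]) be a GR-unitary colligation with transfer function S. Then for all z, w in the open unit polydisk D^d one has the holomorphic difference identity: S(z) − S(w) = Σ_{k=1}^{d} (z_k − w_k) · C (I − Z(z)A)^{-1} P_k (I − A Z(w))^{-1} B, an identity of bounded operators from E to E*. -/

import Mathlib

open ContinuousLinearMap

noncomputable section

variable {d : ℕ} {H E F : Type*}
  [NormedAddCommGroup H] [InnerProductSpace ℂ H] [CompleteSpace H]
  [NormedAddCommGroup E] [InnerProductSpace ℂ E] [CompleteSpace E]
  [NormedAddCommGroup F] [InnerProductSpace ℂ F] [CompleteSpace F]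

/-- `Z(z) = z₁ P₁ + ⋯ + z_d P_d`. -/
def Zop (P : Fin d → H →L[ℂ] H) (z : Fin d → ℂ) : H →L[ℂ] H :=
  ∑ k, z k • P k

/-- The transfer function `S(z) = D + C (I - Z(z)A)⁻¹ Z(z) B` of a Givone–Roesser
colligation. -/
def transferFn (P : Fin d → H →L[ℂ] H) (A : H →L[ℂ] H) (B : E →L[ℂ] H)
    (C : H →L[ℂ] F) (D : E →L[ℂ] F) (z : Fin d → ℂ) : E →L[ℂ] F :=
  D + C ∘L Ring.inverse (1 - Zop P z * A) ∘L (Zop P z ∘L B)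

lemma sum_sq_proj (P : Fin d → H →L[ℂ] H)
    (hPsa : ∀ k, IsSelfAdjoint (P k)) (hPidem : ∀ k, P k * P k = P k)
    (hPsum : ∑ k, P k = 1) (x : H) :
    ∑ k, ‖P k x‖ ^ 2 = ‖x‖ ^ 2 := by
  have h1 : ∑ k, (P k) x = x := by
    have := congrArg (fun T : H →L[ℂ] H => T x) hPsum
    simpa using this
  have hdiag : ∀ k : Fin d, (inner ℂ (P k x) (P k x) : ℂ) = inner ℂ x (P k x) := by
    intro k
    have h2 : (inner ℂ (P k x) (P k x) : ℂ) = inner ℂ x ((P k) ((P k) x)) := by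
      rw [← ContinuousLinearMap.adjoint_inner_right (P k), (hPsa k).adjoint_eq]
    rw [h2]
    have h3 : (P k) ((P k) x) = (P k) x := by
      have := congrArg (fun T : H →L[ℂ] H => T x) (hPidem k)
      simpa [ContinuousLinearMap.mul_apply] using this
    rw [h3]
  have key : (∑ k, (inner ℂ (P k x) (P k x) : ℂ)) = inner ℂ x x := by
    calc (∑ k, (inner ℂ (P k x) (P k x) : ℂ)) = ∑ k, (inner ℂ x (P k x) : ℂ) := by
          exact Finset.sum_congr rfl fun k _ => hdiag k
      _ = inner ℂ x (∑ k, (P k) x) := by rw [inner_sum]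
      _ = inner ℂ x x := by rw [h1]
  simp only [inner_self_eq_norm_sq_to_K] at key
  have h4 : ((∑ k, ‖P k x‖ ^ 2 : ℝ) : ℂ) = ((‖x‖ ^ 2 : ℝ) : ℂ) := by
    push_cast; exact key
  exact_mod_cast h4

lemma Zop_norm_sq (P : Fin d → H →L[ℂ] H)
    (hPsa : ∀ k, IsSelfAdjoint (P k)) (hPorth : ∀ j k, j ≠ k → P j * P k = 0)
    (z : Fin d → ℂ) (x : H) :
    ‖Zop P z x‖ ^ 2 = ∑ k, ‖z k‖ ^ 2 * ‖P k x‖ ^ 2 := by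
  have hcross : ∀ j k : Fin d, j ≠ k → (inner ℂ (P j x) (P k x) : ℂ) = 0 := by
    intro j k hjk
    have h2 : (inner ℂ (P j x) (P k x) : ℂ) = inner ℂ x ((P j) ((P k) x)) := by
      rw [← ContinuousLinearMap.adjoint_inner_right (P j), (hPsa j).adjoint_eq]
    rw [h2]
    have h3 : (P j) ((P k) x) = 0 := by
      have := congrArg (fun T : H →L[ℂ] H => T x) (hPorth j k hjk)
      simpa [ContinuousLinearMap.mul_apply] using this
    simp [h3]
  have hZ : Zop P z x = ∑ k, z k • (P k) x := by
    simp [Zop, ContinuousLinearMap.sum_apply]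
  have key : (inner ℂ (Zop P z x) (Zop P z x) : ℂ)
      = ∑ k, (starRingEnd ℂ) (z k) * (z k * inner ℂ (P k x) (P k x)) := by
    rw [hZ, sum_inner]
    simp only [inner_smul_left, inner_sum, inner_smul_right, Finset.mul_sum]
    refine Finset.sum_congr rfl fun j _ => ?_
    rw [show (starRingEnd ℂ) (z j) * (z j * inner ℂ ((P j) x) ((P j) x))
        = z j * ((starRingEnd ℂ) (z j) * (inner ℂ ((P j) x) ((P j) x) : ℂ)) from by ring]
    exact Finset.sum_eq_single j
      (fun k _ hk => by rw [hcross j k fun h => hk h.symm]; ring)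
      (fun h => absurd (Finset.mem_univ j) h)
  simp only [inner_self_eq_norm_sq_to_K, ← mul_assoc, Complex.conj_mul'] at key
  have : ((‖Zop P z x‖ ^ 2 : ℝ) : ℂ) = ((∑ k, ‖z k‖ ^ 2 * ‖P k x‖ ^ 2 : ℝ) : ℂ) := by
    push_cast; exact key
  exact_mod_cast this

lemma Zop_opNorm_lt_one (hd : 0 < d) (P : Fin d → H →L[ℂ] H)
    (hPsa : ∀ k, IsSelfAdjoint (P k)) (hPidem : ∀ k, P k * P k = P k)
    (hPorth : ∀ j k, j ≠ k → P j * P k = 0) (hPsum : ∑ k, P k = 1)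
    (z : Fin d → ℂ) (hz : ∀ k, ‖z k‖ < 1) : ‖Zop P z‖ < 1 := by
  haveI : Nonempty (Fin d) := Fin.pos_iff_nonempty.mp hd
  have hne : (Finset.univ : Finset (Fin d)).Nonempty := Finset.univ_nonempty
  set c : ℝ := Finset.univ.sup' hne fun k => ‖z k‖ with hc
  have hcle : ∀ k, ‖z k‖ ≤ c := fun k => by
    rw [hc]; exact Finset.le_sup' (fun k => ‖z k‖) (Finset.mem_univ k)
  have hc0 : 0 ≤ c := le_trans (norm_nonneg _) (hcle (Classical.arbitrary _))
  have hc1 : c < 1 := by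
    rw [hc]; exact (Finset.sup'_lt_iff hne).mpr fun k _ => hz k
  have hbd : ∀ x : H, ‖Zop P z x‖ ≤ c * ‖x‖ := by
    intro x
    have hsq : ‖Zop P z x‖ ^ 2 ≤ (c * ‖x‖) ^ 2 := by
      rw [Zop_norm_sq P hPsa hPorth z x, mul_pow]
      calc ∑ k, ‖z k‖ ^ 2 * ‖P k x‖ ^ 2 ≤ ∑ k, c ^ 2 * ‖P k x‖ ^ 2 := by
            refine Finset.sum_le_sum fun k _ => ?_
            have := pow_le_pow_left₀ (norm_nonneg (z k)) (hcle k) 2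
            exact mul_le_mul_of_nonneg_right this (by positivity)
        _ = c ^ 2 * ∑ k, ‖P k x‖ ^ 2 := by rw [Finset.mul_sum]
        _ = c ^ 2 * ‖x‖ ^ 2 := by rw [sum_sq_proj P hPsa hPidem hPsum x]
    have h2 : (0:ℝ) ≤ c * ‖x‖ := by positivity
    exact (pow_le_pow_iff_left₀ (norm_nonneg _) h2 two_ne_zero).mp hsq
  calc ‖Zop P z‖ ≤ c := ContinuousLinearMap.opNorm_le_bound _ hc0 hbd
    _ < 1 := hc1

lemma A_contraction (A : H →L[ℂ] H) (C : H →L[ℂ] F)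
    (hU4 : adjoint A * A + adjoint C ∘L C = 1) : ‖A‖ ≤ 1 := by
  refine ContinuousLinearMap.opNorm_le_bound _ zero_le_one fun x => ?_
  have h1 : adjoint A (A x) + adjoint C (C x) = x := by
    have := congrArg (fun T : H →L[ℂ] H => T x) hU4
    simpa [ContinuousLinearMap.mul_apply] using this
  have h2 : (inner ℂ (A x) (A x) : ℂ) + inner ℂ (C x) (C x) = inner ℂ x x := by
    calc (inner ℂ (A x) (A x) : ℂ) + inner ℂ (C x) (C x)
        = inner ℂ (adjoint A (A x)) x + inner ℂ (adjoint C (C x)) x := by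
          rw [ContinuousLinearMap.adjoint_inner_left, ContinuousLinearMap.adjoint_inner_left]
      _ = inner ℂ (adjoint A (A x) + adjoint C (C x)) x := by rw [inner_add_left]
      _ = inner ℂ x x := by rw [h1]
  simp only [inner_self_eq_norm_sq_to_K] at h2
  have h3 : ‖A x‖ ^ 2 + ‖C x‖ ^ 2 = ‖x‖ ^ 2 := by exact_mod_cast h2
  have h4 : ‖A x‖ ^ 2 ≤ ‖x‖ ^ 2 := by nlinarith [sq_nonneg ‖C x‖]
  have := (pow_le_pow_iff_left₀ (norm_nonneg _) (norm_nonneg _) two_ne_zero).mp h4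
  linarith

/-- **Holomorphic difference identity for a GR-unitary colligation.**
`S(z) - S(w) = ∑ₖ (zₖ - wₖ) C (I - Z(z)A)⁻¹ Pₖ (I - A Z(w))⁻¹ B`
for `z, w` in the open unit polydisk. -/
theorem difference_identity_of_GR_unitary_colligation
    (hd : 0 < d)
    (P : Fin d → H →L[ℂ] H)
    (hPsa : ∀ k, IsSelfAdjoint (P k))
    (hPidem : ∀ k, P k * P k = P k)
    (hPorth : ∀ j k, j ≠ k → P j * P k = 0)
    (hPsum : ∑ k, P k = 1)
    (A : H →L[ℂ] H) (B : E →L[ℂ] H) (C : H →L[ℂ] F) (D : E →L[ℂ] F)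
    (hU1 : A * adjoint A + B ∘L adjoint B = 1)
    (hU2 : A ∘L adjoint C + B ∘L adjoint D = 0)
    (hU3 : C ∘L adjoint C + D ∘L adjoint D = 1)
    (hU4 : adjoint A * A + adjoint C ∘L C = 1)
    (hU5 : adjoint A ∘L B + adjoint C ∘L D = 0)
    (hU6 : adjoint B ∘L B + adjoint D ∘L D = 1)
    (z w : Fin d → ℂ) (hz : ∀ k, ‖z k‖ < 1) (hw : ∀ k, ‖w k‖ < 1) :
    transferFn P A B C D z - transferFn P A B C D w
      = ∑ k, (z k - w k) •
          (C ∘L Ring.inverse (1 - Zop P z * A) ∘L P k ∘L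
            Ring.inverse (1 - A * Zop P w) ∘L B) := by
  have hA : ‖A‖ ≤ 1 := A_contraction A C hU4
  have hZz : ‖Zop P z‖ < 1 := Zop_opNorm_lt_one hd P hPsa hPidem hPorth hPsum z hz
  have hZw : ‖Zop P w‖ < 1 := Zop_opNorm_lt_one hd P hPsa hPidem hPorth hPsum w hw
  have hXz : IsUnit (1 - Zop P z * A) := by
    refine ⟨Units.oneSub _ ?_, rfl⟩
    calc ‖Zop P z * A‖ ≤ ‖Zop P z‖ * ‖A‖ := norm_mul_le _ _
      _ ≤ ‖Zop P z‖ := mul_le_of_le_one_right (norm_nonneg _) hA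
      _ < 1 := hZz
  have hXw : IsUnit (1 - Zop P w * A) := by
    refine ⟨Units.oneSub _ ?_, rfl⟩
    calc ‖Zop P w * A‖ ≤ ‖Zop P w‖ * ‖A‖ := norm_mul_le _ _
      _ ≤ ‖Zop P w‖ := mul_le_of_le_one_right (norm_nonneg _) hA
      _ < 1 := hZw
  have hYw : IsUnit (1 - A * Zop P w) := by
    refine ⟨Units.oneSub _ ?_, rfl⟩
    calc ‖A * Zop P w‖ ≤ ‖A‖ * ‖Zop P w‖ := norm_mul_le _ _
      _ ≤ ‖Zop P w‖ := mul_le_of_le_one_left (norm_nonneg _) hA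
      _ < 1 := hZw
  set a := Ring.inverse (1 - Zop P z * A) with ha
  set a' := Ring.inverse (1 - Zop P w * A) with ha'
  set b := Ring.inverse (1 - A * Zop P w) with hb
  have hswap : a' * Zop P w = Zop P w * b := by
    calc a' * Zop P w = a' * Zop P w * ((1 - A * Zop P w) * b) := by
          rw [hb, Ring.mul_inverse_cancel _ hYw, mul_one]
      _ = a' * ((1 - Zop P w * A) * Zop P w) * b := by noncomm_ring
      _ = (a' * (1 - Zop P w * A)) * (Zop P w * b) := by noncomm_ring
      _ = Zop P w * b := by rw [ha', Ring.inverse_mul_cancel _ hXw, one_mul]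
  have hZdiff : Zop P z - Zop P w = ∑ k, (z k - w k) • P k := by
    simp [Zop, ← Finset.sum_sub_distrib, sub_smul]
  have hmid : a * Zop P z - Zop P w * b = ∑ k, (z k - w k) • (a * P k * b) := by
    have expand : a * (Zop P z - Zop P w) * b
        = a * Zop P z * ((1 - A * Zop P w) * b)
          - (a * (1 - Zop P z * A)) * (Zop P w * b) := by noncomm_ring
    have e1 : a * Zop P z - Zop P w * b = a * (Zop P z - Zop P w) * b := by
      rw [expand, hb, Ring.mul_inverse_cancel _ hYw, ha,
        Ring.inverse_mul_cancel _ hXz, mul_one, one_mul]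
    rw [e1, hZdiff, Finset.mul_sum, Finset.sum_mul]
    exact Finset.sum_congr rfl fun k _ => by
      rw [mul_smul_comm, smul_mul_assoc]
  ext x
  simp only [transferFn, ContinuousLinearMap.sub_apply, ContinuousLinearMap.add_apply,
    ContinuousLinearMap.coe_comp', Function.comp_apply, ContinuousLinearMap.sum_apply,
    ContinuousLinearMap.smul_apply]
  set v := B x with hv
  have h1 : a' (Zop P w v) = Zop P w (b v) := by
    have := congrArg (fun T : H →L[ℂ] H => T v) hswap
    simpa [ContinuousLinearMap.mul_apply] using this
  have h2 : a (Zop P z v) - Zop P w (b v) = ∑ k, (z k - w k) • a (P k (b v)) := by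
    have := congrArg (fun T : H →L[ℂ] H => T v) hmid
    simpa [ContinuousLinearMap.mul_apply, ContinuousLinearMap.sub_apply,
      ContinuousLinearMap.sum_apply, ContinuousLinearMap.smul_apply] using this
  rw [h1]
  calc D x + C (a (Zop P z v)) - (D x + C (Zop P w (b v)))
      = C (a (Zop P z v) - Zop P w (b v)) := by rw [map_sub]; abel
    _ = C (∑ k, (z k - w k) • a (P k (b v))) := by rw [h2]
    _ = ∑ k, (z k - w k) • C (a (P k (b v))) := by
        rw [map_sum]; exact Finset.sum_congr rfl fun k _ => by rw [map_smul]
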